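/- arXiv:1309.2759 — 3 statements merged into one kernel-verified Lean document; each statement's English description precedes it below -/
import Mathlib

section
/- For 0 < q < 1, the product of \bar{z}_q(2) with itself satisfies: \bar{z}_q(2)·\bar{z}_q(2) = 2\bar{z}_q(2,2) + 4\bar{z}_q(3,1) − 4\bar{z}_q(2,1) + 2\bar{z}_q(3) − \bar{z}_q(2) − δ\bar{z}_q(2), where δ = q d/dq. -/
/-- Modified qMZV of length one. -/
noncomputable def zbar1 (q : ℝ) (s : ℕ) : ℝ := ∑' l : ℕ, q ^ (l + 1) / (1 - q ^ (l + 1)) ^ s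

/-- Modified qMZV of length two. -/
noncomputable def zbar2 (q : ℝ) (a b : ℕ) : ℝ :=
  ∑' p : ℕ × ℕ, if p.2 < p.1 ∧ 0 < p.2 then
    q ^ p.1 / ((1 - q ^ p.1) ^ a * (1 - q ^ p.2) ^ b) else 0

/-- The derivation `δ = q d/dq`. -/
noncomputable def deltaZbar1 (q : ℝ) (s : ℕ) : ℝ := q * deriv (fun t : ℝ => zbar1 t s) q

open Filter Finset

namespace ZB

/-- generic term `q^e / ((1-q^m)^s (1-q^n)^t)` -/
noncomputable def G (q : ℝ) (e m n s t : ℕ) : ℝ :=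
  q ^ e / ((1 - q ^ m) ^ s * (1 - q ^ n) ^ t)

variable {q : ℝ}

lemma qm_lt_one (hq0 : 0 < q) (hq1 : q < 1) {m : ℕ} (hm : m ≠ 0) : q ^ m < 1 :=
  pow_lt_one₀ hq0.le hq1 hm

lemma sub_pos' (hq0 : 0 < q) (hq1 : q < 1) {m : ℕ} (hm : m ≠ 0) : 0 < 1 - q ^ m := by
  have := qm_lt_one hq0 hq1 hm; linarith

lemma sub_ne' (hq0 : 0 < q) (hq1 : q < 1) {m : ℕ} (hm : m ≠ 0) : 1 - q ^ m ≠ 0 :=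
  ne_of_gt (sub_pos' hq0 hq1 hm)

lemma one_sub_le (hq0 : 0 < q) (hq1 : q < 1) {m : ℕ} (hm : m ≠ 0) : 1 - q ≤ 1 - q ^ m := by
  have h : q ^ m ≤ q ^ 1 := pow_le_pow_of_le_one hq0.le hq1.le (by omega)
  simpa using by linarith [h, pow_one q]

lemma den4 (hq0 : 0 < q) (hq1 : q < 1) {m n s t : ℕ} (hm : m ≠ 0) (hn : n ≠ 0)
    (hst : s + t ≤ 4) : (1 - q) ^ 4 ≤ (1 - q ^ m) ^ s * (1 - q ^ n) ^ t := by
  have h0 : (0:ℝ) ≤ 1 - q := by linarith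
  have h1 : (1:ℝ) - q ≤ 1 := by linarith
  calc (1 - q) ^ 4 ≤ (1 - q) ^ (s + t) := pow_le_pow_of_le_one h0 h1 hst
    _ = (1 - q) ^ s * (1 - q) ^ t := pow_add _ _ _
    _ ≤ (1 - q ^ m) ^ s * (1 - q ^ n) ^ t := by
        apply mul_le_mul (pow_le_pow_left₀ h0 (one_sub_le hq0 hq1 hm) s)
          (pow_le_pow_left₀ h0 (one_sub_le hq0 hq1 hn) t)
          (pow_nonneg h0 t) (pow_nonneg (by linarith [sub_pos' hq0 hq1 hm]) s)

lemma G_nonneg (hq0 : 0 < q) (hq1 : q < 1) {e m n s t : ℕ} (hm : m ≠ 0) (hn : n ≠ 0) :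
    0 ≤ G q e m n s t :=
  div_nonneg (pow_nonneg hq0.le e)
    (le_of_lt (mul_pos (pow_pos (sub_pos' hq0 hq1 hm) s) (pow_pos (sub_pos' hq0 hq1 hn) t)))

lemma G_le (hq0 : 0 < q) (hq1 : q < 1) {e m n s t c : ℕ} (hm : m ≠ 0) (hn : n ≠ 0)
    (hst : s + t ≤ 4) (hce : c ≤ e) :
    G q e m n s t ≤ ((1 - q) ^ 4)⁻¹ * q ^ c := by
  have h2 : (0:ℝ) < (1 - q) ^ 4 := pow_pos (by linarith) 4
  calc G q e m n s t ≤ q ^ e / (1 - q) ^ 4 :=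
        div_le_div_of_nonneg_left (pow_nonneg hq0.le e) h2 (den4 hq0 hq1 hm hn hst)
    _ = ((1 - q) ^ 4)⁻¹ * q ^ e := by rw [div_eq_inv_mul]
    _ ≤ ((1 - q) ^ 4)⁻¹ * q ^ c := by
        exact mul_le_mul_of_nonneg_left (pow_le_pow_of_le_one hq0.le hq1.le hce)
          (by positivity)

lemma summable_dom (hq0 : 0 < q) (hq1 : q < 1) (C : ℝ) :
    Summable (fun p : ℕ × ℕ => C * (q ^ p.1 * q ^ p.2)) :=
  (((summable_geometric_of_lt_one hq0.le hq1).mul_of_nonneg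
    (summable_geometric_of_lt_one hq0.le hq1)
    (fun _ => pow_nonneg hq0.le _) (fun _ => pow_nonneg hq0.le _))).mul_left C

lemma summable_pair (hq0 : 0 < q) (hq1 : q < 1) {f : ℕ × ℕ → ℝ} (C : ℝ)
    (hC : ∀ p : ℕ × ℕ, |f p| ≤ C * (q ^ p.1 * q ^ p.2)) : Summable f :=
  summable_abs_iff.mp (Summable.of_nonneg_of_le (fun _ => abs_nonneg _) hC
    (summable_dom hq0 hq1 C))

lemma summable_G (hq0 : 0 < q) (hq1 : q < 1) (E M N : ℕ × ℕ → ℕ) (s t : ℕ)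
    (hM : ∀ p, M p ≠ 0) (hN : ∀ p, N p ≠ 0) (hst : s + t ≤ 4)
    (hE : ∀ p : ℕ × ℕ, p.1 + p.2 ≤ E p) :
    Summable (fun p : ℕ × ℕ => G q (E p) (M p) (N p) s t) := by
  apply summable_pair hq0 hq1 (((1 - q) ^ 4)⁻¹)
  intro p
  rw [abs_of_nonneg (G_nonneg hq0 hq1 (hM p) (hN p)), ← pow_add]
  exact G_le hq0 hq1 (hM p) (hN p) hst (hE p)

lemma summable_G_nat (hq0 : 0 < q) (hq1 : q < 1) (E M : ℕ → ℕ) (s t n : ℕ)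
    (hM : ∀ k, M k ≠ 0) (hn : n ≠ 0) (hst : s + t ≤ 4)
    (hE : ∀ k, k ≤ E k) :
    Summable (fun k : ℕ => G q (E k) (M k) n s t) := by
  apply summable_abs_iff.mp
  apply Summable.of_nonneg_of_le (fun _ => abs_nonneg _)
    (fun k => ?_) ((summable_geometric_of_lt_one hq0.le hq1).mul_left (((1 - q) ^ 4)⁻¹))
  rw [abs_of_nonneg (G_nonneg hq0 hq1 (hM k) hn)]
  exact G_le hq0 hq1 (hM k) hn hst (hE k)

/-- The key partial-fraction identity. -/
lemma PF (hq0 : 0 < q) (hq1 : q < 1) (a b : ℕ) :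
    G q (a+1) (a+1) 1 2 0 * G q (b+1) (b+1) 1 2 0 =
      (G q (a+b+2) (a+b+2) (b+1) 2 2 + 2 * G q ((a+b+2)+(a+b+2)) (a+b+2) (b+1) 3 1)
      + (G q ((a+b+2)+(a+1)+(a+1)) (a+b+2) (a+1) 2 2
          + 2 * G q ((a+b+2)+(a+1)) (a+b+2) (a+1) 3 1) := by
  have hx : 1 - q ^ (a+1) ≠ 0 := sub_ne' hq0 hq1 (by omega)
  have hy : 1 - q ^ (b+1) ≠ 0 := sub_ne' hq0 hq1 (by omega)
  have hxy : 1 - q ^ (a+b+2) ≠ 0 := sub_ne' hq0 hq1 (by omega)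
  have E1 : q ^ (a+b+2) = q ^ (a+1) * q ^ (b+1) := by rw [← pow_add]; congr 1; omega
  have E2 : q ^ ((a+b+2)+(a+b+2)) = (q ^ (a+1) * q ^ (b+1)) * (q ^ (a+1) * q ^ (b+1)) := by
    rw [pow_add, E1]
  have E3 : q ^ ((a+b+2)+(a+1)+(a+1))
      = q ^ (a+1) * q ^ (b+1) * q ^ (a+1) * q ^ (a+1) := by
    rw [pow_add, pow_add, E1]
  have E4 : q ^ ((a+b+2)+(a+1)) = q ^ (a+1) * q ^ (b+1) * q ^ (a+1) := by rw [pow_add, E1]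
  rw [E1] at hxy
  simp only [G, pow_zero, mul_one, E1, E2, E3, E4]
  field_simp
  ring

/-- The basis-conversion identity. -/
lemma BAS (hq0 : 0 < q) (hq1 : q < 1) {m n : ℕ} (hm : m ≠ 0) (hn : n ≠ 0) :
    (G q m m n 2 2 + 2 * G q (m+m) m n 3 1)
      + (G q (m+n+n) m n 2 2 + 2 * G q (m+n) m n 3 1)
    = 2 * G q m m n 2 2 + 4 * G q m m n 3 1 - 4 * G q m m n 2 1
      + (G q m m 1 2 0 - 2 * G q m m 1 3 0) := by
  have hx : 1 - q ^ m ≠ 0 := sub_ne' hq0 hq1 hm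
  have hy : 1 - q ^ n ≠ 0 := sub_ne' hq0 hq1 hn
  have E2 : q ^ (m+m) = q ^ m * q ^ m := by rw [pow_add]
  have E3 : q ^ (m+n+n) = q ^ m * q ^ n * q ^ n := by rw [pow_add, pow_add]
  have E4 : q ^ (m+n) = q ^ m * q ^ n := by rw [pow_add]
  simp only [G, pow_zero, mul_one, E2, E3, E4]
  field_simp
  ring

/-- `h` written via `G`, as negative of the delta summand shape. -/
lemma hneg (hq0 : 0 < q) (hq1 : q < 1) {m : ℕ} (hm : m ≠ 0) :
    G q m m 1 2 0 - 2 * G q m m 1 3 0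
      = -(q ^ m * (1 + q ^ m) / (1 - q ^ m) ^ 3) := by
  have hx : 1 - q ^ m ≠ 0 := sub_ne' hq0 hq1 hm
  simp only [G, pow_zero, mul_one]
  field_simp
  ring

lemma zbar2_eq (q : ℝ) (a b : ℕ) :
    zbar2 q a b = ∑' p : ℕ × ℕ, G q (p.1+p.2+2) (p.1+p.2+2) (p.2+1) a b := by
  rw [zbar2]
  have hinj : Function.Injective (fun p : ℕ × ℕ => (p.1+p.2+2, p.2+1)) := by
    intro p p' h
    simp only [Prod.mk.injEq] at h
    exact Prod.ext (by omega) (by omega)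
  rw [← Function.Injective.tsum_eq hinj (f := fun p : ℕ × ℕ =>
      if p.2 < p.1 ∧ 0 < p.2 then q ^ p.1 / ((1 - q ^ p.1) ^ a * (1 - q ^ p.2) ^ b) else 0)]
  · refine tsum_congr fun p => ?_
    rw [if_pos ⟨by omega, by omega⟩]
    rfl
  · intro x hx
    rcases x with ⟨m, n⟩
    simp only [Function.mem_support] at hx
    by_cases hc : n < m ∧ 0 < n
    · exact ⟨(m - n - 1, n - 1), Prod.ext (by simp; omega) (by simp; omega)⟩
    · exact absurd (if_neg hc) hx

/-- grouping a pair sum depending only on the coordinate total -/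
lemma group {H : ℕ → ℝ} (hs : Summable (fun p : ℕ × ℕ => H (p.1 + p.2))) :
    ∑' p : ℕ × ℕ, H (p.1 + p.2) = ∑' n : ℕ, ((n : ℝ) + 1) * H n := by
  have h2 : Summable (fun x : Σ n : ℕ, (antidiagonal n : Finset (ℕ × ℕ)) =>
      H (((x.2 : ℕ × ℕ)).1 + ((x.2 : ℕ × ℕ)).2)) := by
    exact Finset.HasAntidiagonal.sigmaAntidiagonalEquivProd.summable_iff.mpr hs
  calc ∑' p : ℕ × ℕ, H (p.1 + p.2)
      = ∑' x : Σ n : ℕ, (antidiagonal n : Finset (ℕ × ℕ)),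
          H (((x.2 : ℕ × ℕ)).1 + ((x.2 : ℕ × ℕ)).2) := by
        exact (Finset.HasAntidiagonal.sigmaAntidiagonalEquivProd.tsum_eq
          (fun p : ℕ × ℕ => H (p.1 + p.2))).symm
    _ = ∑' n : ℕ, ∑' c : (antidiagonal n : Finset (ℕ × ℕ)),
          H (((c : ℕ × ℕ)).1 + ((c : ℕ × ℕ)).2) := by
        exact Summable.tsum_sigma' (fun n => (hasSum_fintype _).summable) h2
    _ = ∑' n : ℕ, ((n : ℝ) + 1) * H n := by
        refine tsum_congr fun n => ?_
        have he : ∀ c : (antidiagonal n : Finset (ℕ × ℕ)),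
            H (((c : ℕ × ℕ)).1 + ((c : ℕ × ℕ)).2) = H n := by
          rintro ⟨⟨i, j⟩, hc⟩
          rw [Finset.HasAntidiagonal.mem_antidiagonal] at hc
          simp [hc]
        rw [tsum_congr he, tsum_fintype]
        simp [Finset.sum_const, Nat.card_antidiagonal, nsmul_eq_mul]

lemma summable_wt {r : ℝ} (hr0 : 0 ≤ r) (hr1 : r < 1) :
    Summable (fun l : ℕ => ((l : ℝ) + 1) * r ^ l) := by
  have h1 : Summable (fun l : ℕ => (l : ℝ) ^ 1 * r ^ l) :=
    summable_pow_mul_geometric_of_norm_lt_one 1 (by rwa [Real.norm_eq_abs, abs_of_nonneg hr0])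
  have h2 : Summable (fun l : ℕ => r ^ l) := summable_geometric_of_lt_one hr0 hr1
  refine (h1.add h2).congr fun l => ?_
  ring

lemma delta_eq (hq0 : 0 < q) (hq1 : q < 1) :
    deltaZbar1 q 2
      = ∑' l : ℕ, ((l : ℝ) + 1) * (q ^ (l+1) * (1 + q ^ (l+1)) / (1 - q ^ (l+1)) ^ 3) := by
  set r : ℝ := (1 + q) / 2 with hr
  have hr0 : 0 < r := by rw [hr]; linarith
  have hr1 : r < 1 := by rw [hr]; linarith
  have hqr : q < r := by rw [hr]; linarith
  set s : Set ℝ := Set.Ioo (-r) r with hs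
  have hqs : q ∈ s := ⟨by linarith, hqr⟩
  set f : ℕ → ℝ → ℝ := fun l t => t ^ (l+1) / (1 - t ^ (l+1)) ^ 2 with hf
  set f' : ℕ → ℝ → ℝ := fun l t => ((l : ℝ)+1) * t ^ l * (1 + t ^ (l+1)) / (1 - t ^ (l+1)) ^ 3
    with hf'
  have habs : ∀ t ∈ s, |t| < r := by
    rintro t ⟨h1, h2⟩; rw [abs_lt]; exact ⟨h1, h2⟩
  have hpow : ∀ t ∈ s, ∀ l : ℕ, |t ^ (l+1)| ≤ r ^ (l+1) := by
    intro t ht l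
    rw [abs_pow]
    exact pow_le_pow_left₀ (abs_nonneg t) (habs t ht).le _
  have hden : ∀ t ∈ s, ∀ l : ℕ, 1 - r ≤ 1 - t ^ (l+1) := by
    intro t ht l
    have h1 : t ^ (l+1) ≤ |t ^ (l+1)| := le_abs_self _
    have h2 : r ^ (l+1) ≤ r ^ 1 := pow_le_pow_of_le_one hr0.le hr1.le (by omega)
    have := hpow t ht l
    simp only [pow_one] at h2
    linarith
  have hdenpos : ∀ t ∈ s, ∀ l : ℕ, (0:ℝ) < 1 - t ^ (l+1) := by
    intro t ht l; have := hden t ht l; linarith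
  have hderiv : ∀ l : ℕ, ∀ t ∈ s, HasDerivAt (f l) (f' l t) t := by
    intro l t ht
    have hne : (1 - t ^ (l+1)) ^ 2 ≠ 0 := pow_ne_zero 2 (ne_of_gt (hdenpos t ht l))
    have h1 : HasDerivAt (fun z : ℝ => z ^ (l+1)) (((l:ℝ)+1) * t ^ l) t := by
      simpa using hasDerivAt_pow (l+1) t
    have h2 : HasDerivAt (fun z : ℝ => (1 - z ^ (l+1)) ^ 2)
        (2 * (1 - t ^ (l+1)) ^ 1 * (-(((l:ℝ)+1) * t ^ l))) t := by
      simpa using (h1.const_sub 1).fun_pow 2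
    have h3 := h1.fun_div h2 hne
    have hne' : 1 - t ^ (l+1) ≠ 0 := ne_of_gt (hdenpos t ht l)
    refine h3.congr_deriv (Eq.symm ?_)
    rw [hf', show ((1 - t ^ (l+1)) ^ 2) ^ 2 = (1 - t ^ (l+1)) ^ 4 from by ring,
      div_eq_div_iff (pow_ne_zero 3 hne') (pow_ne_zero 4 hne')]
    ring
  set u : ℕ → ℝ := fun l => (2 / (1 - r) ^ 3) * (((l : ℝ) + 1) * r ^ l) with hu
  have hsumu : Summable u := (summable_wt hr0.le hr1).mul_left _
  have hbound : ∀ l : ℕ, ∀ t ∈ s, ‖f' l t‖ ≤ u l := by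
    intro l t ht
    have hd := hdenpos t ht l
    have hd' := hden t ht l
    have h1r : (0:ℝ) < 1 - r := by linarith
    have hnum : |((l:ℝ)+1) * t ^ l * (1 + t ^ (l+1))| ≤ ((l:ℝ)+1) * r ^ l * 2 := by
      rw [abs_mul, abs_mul]
      have e1 : |((l:ℝ)+1)| = (l:ℝ)+1 := abs_of_pos (by positivity)
      have e2 : |t ^ l| ≤ r ^ l := by
        rw [abs_pow]; exact pow_le_pow_left₀ (abs_nonneg t) (habs t ht).le _
      have e3 : |1 + t ^ (l+1)| ≤ 2 := by
        have h2 : r ^ (l+1) ≤ 1 := pow_le_one₀ hr0.le hr1.le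
        have h4 := abs_add_le 1 (t ^ (l+1))
        simp only [abs_one] at h4
        have habs' : |t ^ (l+1)| ≤ 1 := le_trans (hpow t ht l) h2
        linarith
      rw [e1]
      apply mul_le_mul (mul_le_mul_of_nonneg_left e2 (by positivity)) e3
        (abs_nonneg _) (by positivity)
    have hmainle : |((l:ℝ)+1) * t ^ l * (1 + t ^ (l+1))| / (1 - t ^ (l+1)) ^ 3
        ≤ (((l:ℝ)+1) * r ^ l * 2) / (1 - r) ^ 3 :=
      div_le_div₀ (by positivity) hnum (by positivity)
        (pow_le_pow_left₀ h1r.le hd' 3)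
    have heq : (((l:ℝ)+1) * r ^ l * 2) / (1 - r) ^ 3 = u l := by rw [hu]; ring
    rw [Real.norm_eq_abs, hf']
    rw [abs_div, abs_pow, abs_of_pos hd]
    linarith
  have hsumf : ∀ t ∈ s, Summable (fun l => f l t) := by
    intro t ht
    apply summable_abs_iff.mp
    apply Summable.of_nonneg_of_le (fun _ => abs_nonneg _) (fun l => ?_)
      ((summable_geometric_of_lt_one hr0.le hr1).mul_left ((1 / (1 - r) ^ 2) * r))
    have hd := hdenpos t ht l
    rw [hf, abs_div, abs_pow, abs_pow, abs_of_pos hd]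
    calc |t| ^ (l+1) / (1 - t ^ (l+1)) ^ 2
        ≤ r ^ (l+1) / (1 - r) ^ 2 := by
          have h1r : (0:ℝ) < 1 - r := by linarith
          apply div_le_div₀ (by positivity)
            (pow_le_pow_left₀ (abs_nonneg t) (habs t ht).le _) (by positivity)
          exact pow_le_pow_left₀ h1r.le (hden t ht l) 2
      _ = (1 / (1 - r) ^ 2) * r * r ^ l := by rw [pow_succ]; ring
  have hmain : HasDerivAt (fun t : ℝ => zbar1 t 2) (∑' l, f' l q) q := by
    apply hasDerivAt_of_tendstoUniformlyOn (f := fun N t => ∑ l ∈ Finset.range N, f l t)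
      (f' := fun N t => ∑ l ∈ Finset.range N, f' l t) isOpen_Ioo
      (tendstoUniformlyOn_tsum_nat hsumu (fun l t ht => hbound l t ht))
      ?_ ?_ hqs
    · exact Eventually.of_forall fun N t ht =>
        HasDerivAt.fun_sum fun l _ => hderiv l t ht
    · intro t ht
      exact ((hsumf t ht).hasSum).tendsto_sum_nat
  rw [deltaZbar1, hmain.deriv, ← tsum_mul_left]
  refine tsum_congr fun l => ?_
  rw [hf']
  ring

end ZB

open ZB in
/-- `z̄_q(2)² = 2z̄_q(2,2) + 4z̄_q(3,1) − 4z̄_q(2,1) + 2z̄_q(3) − z̄_q(2) − δz̄_q(2)`. -/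
theorem zbar2_mul_zbar2 (q : ℝ) (hq0 : 0 < q) (hq1 : q < 1) :
    zbar1 q 2 * zbar1 q 2 =
      2 * zbar2 q 2 2 + 4 * zbar2 q 3 1 - 4 * zbar2 q 2 1
        + 2 * zbar1 q 3 - zbar1 q 2 - deltaZbar1 q 2 := by
  -- abbreviations for the basis pair summands
  have zb1eq : ∀ s : ℕ, zbar1 q s = ∑' l : ℕ, G q (l+1) (l+1) 1 s 0 := by
    intro s
    exact tsum_congr fun l => by simp [G]
  -- summability of basis pair families
  have S22 : Summable (fun p : ℕ × ℕ => G q (p.1+p.2+2) (p.1+p.2+2) (p.2+1) 2 2) :=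
    summable_G hq0 hq1 _ _ _ 2 2 (fun p => by omega) (fun p => by omega) (by omega)
      (fun p => by omega)
  have S31 : Summable (fun p : ℕ × ℕ => G q (p.1+p.2+2) (p.1+p.2+2) (p.2+1) 3 1) :=
    summable_G hq0 hq1 _ _ _ 3 1 (fun p => by omega) (fun p => by omega) (by omega)
      (fun p => by omega)
  have S21 : Summable (fun p : ℕ × ℕ => G q (p.1+p.2+2) (p.1+p.2+2) (p.2+1) 2 1) :=
    summable_G hq0 hq1 _ _ _ 2 1 (fun p => by omega) (fun p => by omega) (by omega)
      (fun p => by omega)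
  have Sh1 : Summable (fun p : ℕ × ℕ => G q (p.1+p.2+2) (p.1+p.2+2) 1 2 0) :=
    summable_G hq0 hq1 _ _ _ 2 0 (fun p => by omega) (fun p => by omega) (by omega)
      (fun p => by omega)
  have Sh2 : Summable (fun p : ℕ × ℕ => G q (p.1+p.2+2) (p.1+p.2+2) 1 3 0) :=
    summable_G hq0 hq1 _ _ _ 3 0 (fun p => by omega) (fun p => by omega) (by omega)
      (fun p => by omega)
  have Sh : Summable (fun p : ℕ × ℕ =>
      G q (p.1+p.2+2) (p.1+p.2+2) 1 2 0 - 2 * G q (p.1+p.2+2) (p.1+p.2+2) 1 3 0) :=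
    Sh1.sub (Sh2.mul_left 2)
  have SA : Summable (fun p : ℕ × ℕ =>
      G q (p.1+p.2+2) (p.1+p.2+2) (p.2+1) 2 2
        + 2 * G q ((p.1+p.2+2)+(p.1+p.2+2)) (p.1+p.2+2) (p.2+1) 3 1) :=
    S22.add ((summable_G hq0 hq1 _ _ _ 3 1 (fun p => by omega) (fun p => by omega)
      (by omega) (fun p => by omega)).mul_left 2)
  have SB : Summable (fun p : ℕ × ℕ =>
      G q ((p.1+p.2+2)+(p.1+1)+(p.1+1)) (p.1+p.2+2) (p.1+1) 2 2
        + 2 * G q ((p.1+p.2+2)+(p.1+1)) (p.1+p.2+2) (p.1+1) 3 1) :=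
    (summable_G hq0 hq1 _ _ _ 2 2 (fun p => by omega) (fun p => by omega)
      (by omega) (fun p => by omega)).add
    ((summable_G hq0 hq1 _ _ _ 3 1 (fun p => by omega) (fun p => by omega)
      (by omega) (fun p => by omega)).mul_left 2)
  have SBsw : Summable (fun p : ℕ × ℕ =>
      G q ((p.1+p.2+2)+(p.2+1)+(p.2+1)) (p.1+p.2+2) (p.2+1) 2 2
        + 2 * G q ((p.1+p.2+2)+(p.2+1)) (p.1+p.2+2) (p.2+1) 3 1) :=
    (summable_G hq0 hq1 _ _ _ 2 2 (fun p => by omega) (fun p => by omega)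
      (by omega) (fun p => by omega)).add
    ((summable_G hq0 hq1 _ _ _ 3 1 (fun p => by omega) (fun p => by omega)
      (by omega) (fun p => by omega)).mul_left 2)
  -- summability of single families
  have Sg2 : Summable (fun k : ℕ => G q (k+1) (k+1) 1 2 0) :=
    summable_G_nat hq0 hq1 _ _ 2 0 1 (fun k => by omega) (by omega) (by omega)
      (fun k => by omega)
  have Sg3 : Summable (fun k : ℕ => G q (k+1) (k+1) 1 3 0) :=
    summable_G_nat hq0 hq1 _ _ 3 0 1 (fun k => by omega) (by omega) (by omega)
      (fun k => by omega)
  have Ssh : Summable (fun k : ℕ => G q (k+1) (k+1) 1 2 0 - 2 * G q (k+1) (k+1) 1 3 0) :=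
    Sg2.sub (Sg3.mul_left 2)
  have Swt : Summable (fun k : ℕ =>
      ((k:ℝ)+1) * (G q (k+1) (k+1) 1 2 0 - 2 * G q (k+1) (k+1) 1 3 0)) := by
    apply summable_abs_iff.mp
    apply Summable.of_nonneg_of_le (fun _ => abs_nonneg _) (fun k => ?_)
      ((summable_wt hq0.le hq1).mul_left (3 * ((1 - q) ^ 4)⁻¹ * q))
    have hb1 : G q (k+1) (k+1) 1 2 0 ≤ ((1 - q) ^ 4)⁻¹ * q ^ (k+1) :=
      G_le hq0 hq1 (by omega) (by omega) (by omega) (by omega)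
    have hb2 : G q (k+1) (k+1) 1 3 0 ≤ ((1 - q) ^ 4)⁻¹ * q ^ (k+1) :=
      G_le hq0 hq1 (by omega) (by omega) (by omega) (by omega)
    have hn1 : 0 ≤ G q (k+1) (k+1) 1 2 0 := G_nonneg hq0 hq1 (by omega) (by omega)
    have hn2 : 0 ≤ G q (k+1) (k+1) 1 3 0 := G_nonneg hq0 hq1 (by omega) (by omega)
    have habs : |G q (k+1) (k+1) 1 2 0 - 2 * G q (k+1) (k+1) 1 3 0|
        ≤ 3 * (((1 - q) ^ 4)⁻¹ * q ^ (k+1)) := by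
      rw [abs_sub_comm, abs_sub_le_iff]
      constructor <;> nlinarith
    rw [abs_mul, abs_of_pos (by positivity : (0:ℝ) < (k:ℝ)+1)]
    calc ((k:ℝ)+1) * |G q (k+1) (k+1) 1 2 0 - 2 * G q (k+1) (k+1) 1 3 0|
        ≤ ((k:ℝ)+1) * (3 * (((1 - q) ^ 4)⁻¹ * q ^ (k+1))) :=
          mul_le_mul_of_nonneg_left habs (by positivity)
      _ = 3 * ((1 - q) ^ 4)⁻¹ * q * (((k:ℝ)+1) * q ^ k) := by rw [pow_succ]; ring
  -- norm-summability for the product formula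
  have hnorm : Summable (fun l : ℕ => ‖G q (l+1) (l+1) 1 2 0‖) :=
    Sg2.congr fun l => (Real.norm_of_nonneg (G_nonneg hq0 hq1 (by omega) (by omega))).symm
  -- the evaluation of the `h`-part
  have hpart : (∑' p : ℕ × ℕ,
      (G q (p.1+p.2+2) (p.1+p.2+2) 1 2 0 - 2 * G q (p.1+p.2+2) (p.1+p.2+2) 1 3 0))
      = 2 * zbar1 q 3 - zbar1 q 2 - deltaZbar1 q 2 := by
    have hgroup := group (H := fun k => G q (k+2) (k+2) 1 2 0 - 2 * G q (k+2) (k+2) 1 3 0) Sh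
    rw [hgroup]
    have hshift : (∑' n : ℕ, ((n:ℝ)+1) * (G q (n+2) (n+2) 1 2 0 - 2 * G q (n+2) (n+2) 1 3 0))
        = ∑' k : ℕ, (k:ℝ) * (G q (k+1) (k+1) 1 2 0 - 2 * G q (k+1) (k+1) 1 3 0) := by
      have hsupp : Function.support
          (fun k : ℕ => (k:ℝ) * (G q (k+1) (k+1) 1 2 0 - 2 * G q (k+1) (k+1) 1 3 0))
          ⊆ Set.range Nat.succ := by
        intro x hx
        match x with
        | 0 => exact absurd (by simp) hx
        | Nat.succ k => exact ⟨k, rfl⟩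
      rw [← Function.Injective.tsum_eq Nat.succ_injective
        (f := fun k : ℕ => (k:ℝ) * (G q (k+1) (k+1) 1 2 0 - 2 * G q (k+1) (k+1) 1 3 0)) hsupp]
      refine tsum_congr fun n => ?_
      show ((n:ℝ)+1) * (G q (n+2) (n+2) 1 2 0 - 2 * G q (n+2) (n+2) 1 3 0)
        = ((n.succ : ℕ):ℝ) * (G q (n.succ+1) (n.succ+1) 1 2 0 - 2 * G q (n.succ+1) (n.succ+1) 1 3 0)
      have e : n.succ + 1 = n + 2 := rfl
      rw [e]
      push_cast
      ring
    rw [hshift]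
    have hsplit : (∑' k : ℕ, (k:ℝ) * (G q (k+1) (k+1) 1 2 0 - 2 * G q (k+1) (k+1) 1 3 0))
        = (∑' k : ℕ, ((k:ℝ)+1) * (G q (k+1) (k+1) 1 2 0 - 2 * G q (k+1) (k+1) 1 3 0))
          - ∑' k : ℕ, (G q (k+1) (k+1) 1 2 0 - 2 * G q (k+1) (k+1) 1 3 0) := by
      rw [← Summable.tsum_sub Swt Ssh]
      refine tsum_congr fun k => ?_
      ring
    rw [hsplit]
    have hdel : (∑' k : ℕ, ((k:ℝ)+1) * (G q (k+1) (k+1) 1 2 0 - 2 * G q (k+1) (k+1) 1 3 0))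
        = - deltaZbar1 q 2 := by
      rw [delta_eq hq0 hq1, ← tsum_neg]
      refine tsum_congr fun k => ?_
      rw [hneg hq0 hq1 (show k+1 ≠ 0 by omega)]
      ring
    have hz : (∑' k : ℕ, (G q (k+1) (k+1) 1 2 0 - 2 * G q (k+1) (k+1) 1 3 0))
        = zbar1 q 2 - 2 * zbar1 q 3 := by
      rw [Summable.tsum_sub Sg2 (Sg3.mul_left 2), tsum_mul_left, zb1eq 2, zb1eq 3]
    rw [hdel, hz]
    ring
  -- main chain
  calc zbar1 q 2 * zbar1 q 2
      = ∑' p : ℕ × ℕ, G q (p.1+1) (p.1+1) 1 2 0 * G q (p.2+1) (p.2+1) 1 2 0 := by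
        rw [zb1eq 2]
        exact tsum_mul_tsum_of_summable_norm hnorm hnorm
    _ = ∑' p : ℕ × ℕ,
          ((G q (p.1+p.2+2) (p.1+p.2+2) (p.2+1) 2 2
            + 2 * G q ((p.1+p.2+2)+(p.1+p.2+2)) (p.1+p.2+2) (p.2+1) 3 1)
          + (G q ((p.1+p.2+2)+(p.1+1)+(p.1+1)) (p.1+p.2+2) (p.1+1) 2 2
            + 2 * G q ((p.1+p.2+2)+(p.1+1)) (p.1+p.2+2) (p.1+1) 3 1)) :=
        tsum_congr fun p => PF hq0 hq1 p.1 p.2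
    _ = (∑' p : ℕ × ℕ, (G q (p.1+p.2+2) (p.1+p.2+2) (p.2+1) 2 2
            + 2 * G q ((p.1+p.2+2)+(p.1+p.2+2)) (p.1+p.2+2) (p.2+1) 3 1))
        + ∑' p : ℕ × ℕ, (G q ((p.1+p.2+2)+(p.1+1)+(p.1+1)) (p.1+p.2+2) (p.1+1) 2 2
            + 2 * G q ((p.1+p.2+2)+(p.1+1)) (p.1+p.2+2) (p.1+1) 3 1) :=
        Summable.tsum_add SA SB
    _ = (∑' p : ℕ × ℕ, (G q (p.1+p.2+2) (p.1+p.2+2) (p.2+1) 2 2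
            + 2 * G q ((p.1+p.2+2)+(p.1+p.2+2)) (p.1+p.2+2) (p.2+1) 3 1))
        + ∑' p : ℕ × ℕ, (G q ((p.1+p.2+2)+(p.2+1)+(p.2+1)) (p.1+p.2+2) (p.2+1) 2 2
            + 2 * G q ((p.1+p.2+2)+(p.2+1)) (p.1+p.2+2) (p.2+1) 3 1) := by
        congr 1
        calc (∑' p : ℕ × ℕ, (G q ((p.1+p.2+2)+(p.1+1)+(p.1+1)) (p.1+p.2+2) (p.1+1) 2 2
              + 2 * G q ((p.1+p.2+2)+(p.1+1)) (p.1+p.2+2) (p.1+1) 3 1))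
            = ∑' p : ℕ × ℕ, (G q ((p.2+p.1+2)+(p.1+1)+(p.1+1)) (p.2+p.1+2) (p.1+1) 2 2
              + 2 * G q ((p.2+p.1+2)+(p.1+1)) (p.2+p.1+2) (p.1+1) 3 1) := by
              refine tsum_congr fun p => ?_
              rw [show p.1+p.2+2 = p.2+p.1+2 from by omega]
          _ = ∑' p : ℕ × ℕ, (G q ((p.1+p.2+2)+(p.2+1)+(p.2+1)) (p.1+p.2+2) (p.2+1) 2 2
              + 2 * G q ((p.1+p.2+2)+(p.2+1)) (p.1+p.2+2) (p.2+1) 3 1) := by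
              exact (Equiv.prodComm ℕ ℕ).tsum_eq (fun p : ℕ × ℕ =>
                G q ((p.1+p.2+2)+(p.2+1)+(p.2+1)) (p.1+p.2+2) (p.2+1) 2 2
                  + 2 * G q ((p.1+p.2+2)+(p.2+1)) (p.1+p.2+2) (p.2+1) 3 1)
    _ = ∑' p : ℕ × ℕ, ((G q (p.1+p.2+2) (p.1+p.2+2) (p.2+1) 2 2
            + 2 * G q ((p.1+p.2+2)+(p.1+p.2+2)) (p.1+p.2+2) (p.2+1) 3 1)
          + (G q ((p.1+p.2+2)+(p.2+1)+(p.2+1)) (p.1+p.2+2) (p.2+1) 2 2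
            + 2 * G q ((p.1+p.2+2)+(p.2+1)) (p.1+p.2+2) (p.2+1) 3 1)) :=
        (Summable.tsum_add SA SBsw).symm
    _ = ∑' p : ℕ × ℕ, (2 * G q (p.1+p.2+2) (p.1+p.2+2) (p.2+1) 2 2
          + 4 * G q (p.1+p.2+2) (p.1+p.2+2) (p.2+1) 3 1
          - 4 * G q (p.1+p.2+2) (p.1+p.2+2) (p.2+1) 2 1
          + (G q (p.1+p.2+2) (p.1+p.2+2) 1 2 0
            - 2 * G q (p.1+p.2+2) (p.1+p.2+2) 1 3 0)) :=
        tsum_congr fun p => BAS hq0 hq1 (by omega) (by omega)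
    _ = 2 * zbar2 q 2 2 + 4 * zbar2 q 3 1 - 4 * zbar2 q 2 1
        + (2 * zbar1 q 3 - zbar1 q 2 - deltaZbar1 q 2) := by
        rw [Summable.tsum_add (((S22.mul_left 2).add (S31.mul_left 4)).sub (S21.mul_left 4)) Sh,
          Summable.tsum_sub ((S22.mul_left 2).add (S31.mul_left 4)) (S21.mul_left 4),
          Summable.tsum_add (S22.mul_left 2) (S31.mul_left 4),
          tsum_mul_left, tsum_mul_left, tsum_mul_left,
          zbar2_eq q 2 2, zbar2_eq q 3 1, zbar2_eq q 2 1, hpart]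
    _ = 2 * zbar2 q 2 2 + 4 * zbar2 q 3 1 - 4 * zbar2 q 2 1
        + 2 * zbar1 q 3 - zbar1 q 2 - deltaZbar1 q 2 := by ring
end

section
/- For 0 < q < 1: \bar{z}_q(2)·\bar{z}_q(3) = 3\bar{z}_q(3,2) + \bar{z}_q(2,3) + 6\bar{z}_q(4,1) − 2\bar{z}_q(2,2) − 7\bar{z}_q(3,1) + \bar{z}_q(2,1) − δ\bar{z}_q(3) + 3\bar{z}_q(4) − 2\bar{z}_q(3), where δ = q d/dq. -/
/-- Auxiliary: summand of the double sum over pairs. -/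
noncomputable def Wf (q : ℝ) (t a b : ℕ) (p : ℕ × ℕ) : ℝ :=
  q ^ (p.1 + 1) * q ^ (p.2 + 1) /
    ((1 - q ^ (p.1 + p.2 + 2)) ^ t * (1 - q ^ (p.1 + 1)) ^ a * (1 - q ^ (p.2 + 1)) ^ b)

/-- Auxiliary: the double sum `∑_{n,k ≥ 1} q^{n+k} / ((1-q^{n+k})^t (1-q^n)^a (1-q^k)^b)`. -/
noncomputable def W (q : ℝ) (t a b : ℕ) : ℝ := ∑' p : ℕ × ℕ, Wf q t a b p

/-- Auxiliary: `∑_{m ≥ 2} (m-1) q^m / (1-q^m)^t`. -/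
noncomputable def NB (q : ℝ) (t : ℕ) : ℝ :=
  ∑' l : ℕ, ((l : ℝ) + 1) * q ^ (l + 2) / (1 - q ^ (l + 2)) ^ t

def sigEquiv : (Σ s : ℕ, Fin (s + 1)) ≃ ℕ × ℕ where
  toFun σ := (σ.2.1, σ.1 - σ.2.1)
  invFun p := ⟨p.1 + p.2, ⟨p.1, by omega⟩⟩
  left_inv := by
    rintro ⟨s, ⟨i, hi⟩⟩
    refine Sigma.ext (by simp; omega) ?_
    rw [Fin.heq_ext_iff (by simp; omega)]
  right_inv := by rintro ⟨a, b⟩; simp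

section
variable {q : ℝ} (hq0 : 0 < q) (hq1 : q < 1)
include hq0 hq1

lemma den_pos (n : ℕ) : 0 < 1 - q ^ (n + 1) := by
  have h1 : q ^ (n+1) ≤ q := pow_le_of_le_one hq0.le hq1.le (Nat.succ_ne_zero n)
  linarith

lemma den_ge (n : ℕ) : 1 - q ≤ 1 - q ^ (n + 1) := by
  have h1 : q ^ (n+1) ≤ q := pow_le_of_le_one hq0.le hq1.le (Nat.succ_ne_zero n)
  linarith

lemma summable_geom_one : Summable (fun l : ℕ => q ^ (l + 1)) := by
  simp only [pow_succ]
  exact (summable_geometric_of_lt_one hq0.le hq1).mul_right q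

lemma summable_geom_pair : Summable (fun p : ℕ × ℕ => q ^ (p.1 + 1) * q ^ (p.2 + 1)) := by
  have h : Summable (fun l : ℕ => ‖q ^ (l + 1)‖) := by
    simpa only [norm_pow, Real.norm_eq_abs, abs_of_pos hq0] using summable_geom_one hq0 hq1
  exact summable_mul_of_summable_norm (f := fun l : ℕ => q ^ (l+1)) (g := fun l : ℕ => q ^ (l+1)) h h

lemma den2_pos (p : ℕ × ℕ) : 0 < 1 - q ^ (p.1 + p.2 + 2) := den_pos hq0 hq1 (p.1 + p.2 + 1)

lemma Wf_nonneg (t a b : ℕ) (p : ℕ × ℕ) : 0 ≤ Wf q t a b p := by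
  have h0 := den_pos hq0 hq1 p.1
  have h1 := den_pos hq0 hq1 p.2
  have h2 := den2_pos hq0 hq1 p
  unfold Wf
  positivity

lemma summable_Wf (t a b : ℕ) : Summable (Wf q t a b) := by
  have hq' : 0 < 1 - q := by linarith
  have hg : Summable (fun p : ℕ × ℕ => ((1-q) ^ (t+a+b))⁻¹ * (q ^ (p.1 + 1) * q ^ (p.2 + 1))) :=
    (summable_geom_pair hq0 hq1).mul_left _
  refine Summable.of_nonneg_of_le (Wf_nonneg hq0 hq1 t a b) (fun p => ?_) hg
  have h0 := den_pos hq0 hq1 p.1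
  have h1 := den_pos hq0 hq1 p.2
  have h2 := den2_pos hq0 hq1 p
  have key : (1-q)^(t+a+b) ≤ (1 - q ^ (p.1 + p.2 + 2)) ^ t * (1 - q ^ (p.1 + 1)) ^ a * (1 - q ^ (p.2 + 1)) ^ b := by
    rw [pow_add, pow_add]
    gcongr ?_ * ?_ * ?_
    · exact pow_le_pow_left₀ hq'.le (den_ge hq0 hq1 (p.1 + p.2 + 1)) _
    · exact pow_le_pow_left₀ hq'.le (den_ge hq0 hq1 _) _
    · exact pow_le_pow_left₀ hq'.le (den_ge hq0 hq1 _) _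
  unfold Wf
  rw [div_le_iff₀ (by positivity), inv_mul_eq_div, div_mul_eq_mul_div, le_div_iff₀ (by positivity)]
  calc q ^ (p.1 + 1) * q ^ (p.2 + 1) * (1-q)^(t+a+b)
      ≤ q ^ (p.1 + 1) * q ^ (p.2 + 1) * ((1 - q ^ (p.1 + p.2 + 2)) ^ t * (1 - q ^ (p.1 + 1)) ^ a * (1 - q ^ (p.2 + 1)) ^ b) := by
        gcongr
    _ = _ := by ring

lemma Wf_rec (t a b : ℕ) (p : ℕ × ℕ) :
    Wf q t (a+1) (b+1) p =
      Wf q (t+1) a (b+1) p + Wf q (t+1) (a+1) b p - Wf q (t+1) a b p := by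
  have h0 := (den_pos hq0 hq1 p.1).ne'
  have h1 := (den_pos hq0 hq1 p.2).ne'
  have h2 := (den2_pos hq0 hq1 p).ne'
  have hxy : q ^ (p.1 + p.2 + 2) = q ^ (p.1 + 1) * q ^ (p.2 + 1) := by
    rw [← pow_add]; ring_nf
  unfold Wf
  rw [hxy] at h2 ⊢
  generalize q ^ (p.1 + 1) = x at h0 h2 ⊢
  generalize q ^ (p.2 + 1) = y at h1 h2 ⊢
  rw [pow_succ (1-x*y) t, pow_succ (1-x) a, pow_succ (1-y) b]
  have hB : (1-x*y)^t ≠ 0 := pow_ne_zero _ h2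
  have hA : (1-x)^a ≠ 0 := pow_ne_zero _ h0
  have hC : (1-y)^b ≠ 0 := pow_ne_zero _ h1
  field_simp
  ring

lemma W_rec (t a b : ℕ) :
    W q t (a+1) (b+1) =
      W q (t+1) a (b+1) + W q (t+1) (a+1) b - W q (t+1) a b := by
  unfold W
  rw [← Summable.tsum_add (summable_Wf hq0 hq1 _ _ _) (summable_Wf hq0 hq1 _ _ _),
    ← Summable.tsum_sub (((summable_Wf hq0 hq1 _ _ _)).add (summable_Wf hq0 hq1 _ _ _)) (summable_Wf hq0 hq1 _ _ _)]
  exact tsum_congr fun p => by rw [Wf_rec hq0 hq1 t a b p]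

omit hq0 hq1 in
lemma W_b0 (t a : ℕ) : W q t a 0 = zbar2 q t a := by
  classical
  set g : ℕ × ℕ → ℕ × ℕ := fun p => (p.1 + p.2 + 2, p.1 + 1) with hgdef
  have hinj : Function.Injective g := by
    intro p p' h
    simp only [hgdef, Prod.mk.injEq] at h
    exact Prod.ext (by omega) (by omega)
  set F : ℕ × ℕ → ℝ := fun x => if x.2 < x.1 ∧ 0 < x.2 then
      q ^ x.1 / ((1 - q ^ x.1) ^ t * (1 - q ^ x.2) ^ a) else 0 with hFdef
  have hzero : Function.support F ⊆ Set.range g := by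
    intro x hx
    by_contra hnx
    apply hx
    show (if x.2 < x.1 ∧ 0 < x.2 then q ^ x.1 / ((1 - q ^ x.1) ^ t * (1 - q ^ x.2) ^ a) else 0) = 0
    rw [if_neg]
    rintro ⟨hlt, hpos⟩
    refine hnx ⟨(x.2 - 1, x.1 - x.2 - 1), ?_⟩
    obtain ⟨x1, x2⟩ := x
    simp only [hgdef, Prod.mk.injEq]
    simp only [Prod.mk.injEq] at *
    omega
  have key := hinj.tsum_eq (f := F) hzero
  rw [zbar2, ← hFdef, ← key]
  refine tsum_congr fun p => ?_
  have : F (g p) = q ^ (p.1 + p.2 + 2) / ((1 - q ^ (p.1 + p.2 + 2)) ^ t * (1 - q ^ (p.1 + 1)) ^ a) := by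
    rw [hFdef]
    simp only [hgdef]
    rw [if_pos ⟨by omega, by omega⟩]
  rw [this, Wf, pow_zero, mul_one, ← pow_add,
    show (p.1 + 1) + (p.2 + 1) = p.1 + p.2 + 2 from by omega]

omit hq0 hq1 in
lemma W_a0 (t b : ℕ) : W q t 0 b = zbar2 q t b := by
  rw [← W_b0 t b, W, W]
  rw [← Equiv.tsum_eq (Equiv.prodComm ℕ ℕ) (Wf q t b 0)]
  refine tsum_congr fun p => ?_
  unfold Wf
  simp only [Equiv.prodComm_apply, Prod.fst_swap, Prod.snd_swap, pow_zero, mul_one, one_mul]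
  rw [show p.2 + p.1 + 2 = p.1 + p.2 + 2 from by omega]
  ring

set_option maxHeartbeats 1000000 in
lemma W_00 (t : ℕ) : W q t 0 0 = NB q t := by
  have hsum : Summable (Wf q t 0 0) := summable_Wf hq0 hq1 t 0 0
  have key : ∀ σ : Σ s : ℕ, Fin (s + 1),
      Wf q t 0 0 (sigEquiv σ) = q ^ (σ.1 + 2) / (1 - q ^ (σ.1 + 2)) ^ t := by
    rintro ⟨s, ⟨i, hi⟩⟩
    have e1 : sigEquiv ⟨s, ⟨i, hi⟩⟩ = ((i : ℕ), s - i) := rfl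
    rw [e1, Wf]
    simp only [pow_zero, mul_one]
    rw [← pow_add,
      show (i + 1) + (s - i + 1) = s + 2 from by omega,
      show i + (s - i) + 2 = s + 2 from by omega]
  rw [W, ← Equiv.tsum_eq sigEquiv (Wf q t 0 0)]
  have hsum2 : Summable fun σ : Σ s : ℕ, Fin (s + 1) => Wf q t 0 0 (sigEquiv σ) :=
    (Equiv.summable_iff sigEquiv).2 hsum
  rw [tsum_congr key, Summable.tsum_sigma' (fun b => ((hsum2.congr key).comp_injective sigma_mk_injective)) (hsum2.congr key)]
  rw [NB]
  refine tsum_congr fun s => ?_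
  rw [tsum_fintype]
  simp [Finset.sum_const, Finset.card_univ, mul_div_assoc]

lemma summable_zbar1 (s : ℕ) : Summable (fun l : ℕ => q ^ (l + 1) / (1 - q ^ (l + 1)) ^ s) := by
  have hq' : 0 < 1 - q := by linarith
  refine Summable.of_nonneg_of_le (fun l => ?_) (fun l => ?_)
    (((summable_geom_one hq0 hq1)).mul_left (((1-q) ^ s)⁻¹ : ℝ))
  · have := den_pos hq0 hq1 l
    positivity
  · have h1 := den_pos hq0 hq1 l
    have h2 : q ^ (l+1) ≤ q := pow_le_of_le_one hq0.le hq1.le (Nat.succ_ne_zero l)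
    rw [div_le_iff₀ (by positivity), inv_mul_eq_div, div_mul_eq_mul_div, le_div_iff₀ (by positivity)]
    have key : (1-q)^s ≤ (1 - q^(l+1))^s := pow_le_pow_left₀ hq'.le (by linarith) s
    nlinarith [pow_pos hq0 (l+1), pow_nonneg (le_of_lt hq') s]

omit hq0 hq1 in
lemma summable_lgeom (c : ℝ) (hc0 : 0 ≤ c) (hc1 : c < 1) :
    Summable (fun l : ℕ => ((l : ℝ) + 1) * c ^ l) := by
  have h1 : Summable (fun l : ℕ => (l : ℝ) ^ 1 * c ^ l) := by
    have := summable_pow_mul_geometric_of_norm_lt_one (R := ℝ) 1 (r := c)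
      (by rwa [Real.norm_eq_abs, abs_of_nonneg hc0])
    simpa using this
  have h2 : Summable (fun l : ℕ => c ^ l) := summable_geometric_of_lt_one hc0 hc1
  simpa [add_mul, pow_one] using (by simpa [pow_one] using h1 : Summable fun l : ℕ => (l:ℝ) * c ^ l).add h2

lemma summable_wshift (t j : ℕ) :
    Summable (fun l : ℕ => ((l : ℝ) + 1) * q ^ (l + j + 1) / (1 - q ^ (l + j + 1)) ^ t) := by
  have hq' : 0 < 1 - q := by linarith
  refine Summable.of_nonneg_of_le (fun l => ?_) (fun l => ?_)
    ((summable_lgeom q hq0.le hq1).mul_left ((q ^ (j+1)) * ((1-q) ^ t)⁻¹))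
  · have h2 : (0:ℝ) < 1 - q ^ (l + j + 1) := den_pos hq0 hq1 (l + j)
    positivity
  · have h1 : (0:ℝ) < 1 - q ^ (l + j + 1) := den_pos hq0 hq1 (l + j)
    have key : (1-q)^t ≤ (1 - q^(l+j+1))^t := pow_le_pow_left₀ hq'.le (den_ge hq0 hq1 (l+j)) t
    rw [div_le_iff₀ (by positivity)]
    have e1 : q ^ (j+1) * ((1-q)^t)⁻¹ * (((l:ℝ)+1) * q ^ l) * (1 - q^(l+j+1))^t
        = ((l:ℝ)+1) * (q^(l+j+1) * ((1 - q^(l+j+1))^t * ((1-q)^t)⁻¹)) := by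
      rw [show q ^ (l+j+1) = q^(j+1) * q^l from by rw [← pow_add]; congr 1; omega]
      ring
    rw [e1]
    have hfac : (1:ℝ) ≤ (1 - q^(l+j+1))^t * ((1-q)^t)⁻¹ := by
      rw [← div_eq_mul_inv, le_div_iff₀ (by positivity), one_mul]
      exact key
    have base : (0:ℝ) ≤ ((l:ℝ)+1) * q^(l+j+1) := by positivity
    calc ((l:ℝ)+1) * q ^ (l+j+1) = ((l:ℝ)+1) * q^(l+j+1) * 1 := by ring
      _ ≤ ((l:ℝ)+1) * q^(l+j+1) * ((1 - q^(l+j+1))^t * ((1-q)^t)⁻¹) :=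
          mul_le_mul_of_nonneg_left hfac base
      _ = ((l:ℝ)+1) * (q^(l+j+1) * ((1 - q^(l+j+1))^t * ((1-q)^t)⁻¹)) := by ring

lemma deriv_zbar3 :
    deltaZbar1 q 3 = ∑' l : ℕ, ((l : ℝ) + 1) *
      (3 * q ^ (l + 1) / (1 - q ^ (l + 1)) ^ 4 - 2 * q ^ (l + 1) / (1 - q ^ (l + 1)) ^ 3) := by
  have hq' : 0 < 1 - q := by linarith
  set c : ℝ := (1 + q) / 2 with hc
  have hc0 : 0 < c := by positivity
  have hcq : q < c := by rw [hc]; linarith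
  have hc1 : c < 1 := by rw [hc]; linarith
  have hc' : 0 < 1 - c := by linarith
  set g : ℕ → ℝ → ℝ := fun l z => z ^ (l + 1) / (1 - z ^ (l + 1)) ^ 3 with hg
  set g' : ℕ → ℝ → ℝ := fun l z =>
    ((l : ℝ) + 1) * z ^ l * (1 / (1 - z ^ (l + 1)) ^ 3 + 3 * z ^ (l + 1) / (1 - z ^ (l + 1)) ^ 4) with hg'
  set u : ℕ → ℝ := fun l => ((l : ℝ) + 1) * c ^ l * (1 / (1 - c) ^ 3 + 3 / (1 - c) ^ 4) with hu
  have hu_sum : Summable u := (summable_lgeom c hc0.le hc1).mul_right _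
  have hmem : ∀ y : ℝ, y ∈ Set.Ioo (-c) c → ∀ l : ℕ,
      |y| ≤ c ∧ |y ^ (l + 1)| ≤ c ^ (l + 1) ∧ 1 - c ≤ 1 - y ^ (l + 1) := by
    intro y hy l
    have h1 : |y| ≤ c := by
      rw [abs_le]; exact ⟨hy.1.le, hy.2.le⟩
    have h2 : |y ^ (l + 1)| ≤ c ^ (l + 1) := by
      rw [abs_pow]; exact pow_le_pow_left₀ (abs_nonneg y) h1 _
    refine ⟨h1, h2, ?_⟩
    have h3 : c ^ (l + 1) ≤ c := pow_le_of_le_one hc0.le hc1.le (Nat.succ_ne_zero l)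
    have h4 : y ^ (l + 1) ≤ c := le_trans (le_abs_self _) (le_trans h2 h3)
    linarith
  have hder : ∀ l : ℕ, ∀ y : ℝ, y ∈ Set.Ioo (-c) c → HasDerivAt (g l) (g' l y) y := by
    intro l y hy
    obtain ⟨h1, h2, h3⟩ := hmem y hy l
    have hden : (0:ℝ) < 1 - y ^ (l + 1) := lt_of_lt_of_le hc' h3
    have hpow : HasDerivAt (fun z : ℝ => z ^ (l + 1)) (((l:ℝ) + 1) * y ^ l) y := by
      simpa using hasDerivAt_pow (l + 1) y
    have hden' : HasDerivAt (fun z : ℝ => (1 - z ^ (l + 1)) ^ 3)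
        (3 * (1 - y ^ (l + 1)) ^ 2 * -(((l:ℝ) + 1) * y ^ l)) y := by
      have := (hpow.const_sub 1).fun_pow 3
      simpa using this
    have := hpow.fun_div hden' (by positivity)
    refine this.congr_deriv ?_
    rw [hg']
    field_simp
    ring
  have hbound : ∀ l : ℕ, ∀ y : ℝ, y ∈ Set.Ioo (-c) c → ‖g' l y‖ ≤ u l := by
    intro l y hy
    obtain ⟨h1, h2, h3⟩ := hmem y hy l
    have hden : (0:ℝ) < 1 - y ^ (l + 1) := lt_of_lt_of_le hc' h3
    rw [hg', hu, Real.norm_eq_abs]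
    rw [abs_mul, abs_mul]
    have e1 : |((l:ℝ) + 1)| = (l:ℝ) + 1 := abs_of_pos (by positivity)
    have e2 : |y ^ l| ≤ c ^ l := by rw [abs_pow]; exact pow_le_pow_left₀ (abs_nonneg y) h1 _
    have e3 : |1 / (1 - y ^ (l + 1)) ^ 3 + 3 * y ^ (l + 1) / (1 - y ^ (l + 1)) ^ 4|
        ≤ 1 / (1 - c) ^ 3 + 3 / (1 - c) ^ 4 := by
      refine le_trans (abs_add_le _ _) ?_
      have i1 : |1 / (1 - y ^ (l + 1)) ^ 3| ≤ 1 / (1 - c) ^ 3 := by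
        rw [abs_of_pos (by positivity)]
        gcongr
      have i2 : |3 * y ^ (l + 1) / (1 - y ^ (l + 1)) ^ 4| ≤ 3 / (1 - c) ^ 4 := by
        rw [abs_div, abs_of_pos (by positivity : (0:ℝ) < (1 - y ^ (l+1)) ^ 4)]
        rw [abs_mul, abs_of_nonneg (by norm_num : (0:ℝ) ≤ 3)]
        have : |y ^ (l+1)| ≤ 1 := le_trans h2 (le_of_lt (lt_of_le_of_lt (pow_le_of_le_one hc0.le hc1.le (Nat.succ_ne_zero l)) hc1))
        calc 3 * |y ^ (l + 1)| / (1 - y ^ (l + 1)) ^ 4 ≤ 3 * 1 / (1 - c) ^ 4 := by gcongr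
          _ = 3 / (1 - c) ^ 4 := by ring
      linarith
    rw [e1]
    calc ((l:ℝ) + 1) * |y ^ l| * |_| ≤ ((l:ℝ)+1) * c ^ l * (1 / (1 - c) ^ 3 + 3 / (1 - c) ^ 4) := by
          gcongr
    _ = _ := rfl
  have hq_mem : q ∈ Set.Ioo (-c) c := ⟨by linarith, hcq⟩
  have hsum0 : Summable (fun l => g l q) := summable_zbar1 hq0 hq1 3
  have hd : HasDerivAt (fun z : ℝ => ∑' l : ℕ, g l z) (∑' l : ℕ, g' l q) q :=
    hasDerivAt_tsum_of_isPreconnected hu_sum isOpen_Ioo isPreconnected_Ioo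
      hder hbound hq_mem hsum0 hq_mem
  have hzb : (fun z : ℝ => zbar1 z 3) = fun z : ℝ => ∑' l : ℕ, g l z := rfl
  rw [deltaZbar1, hzb, hd.deriv, ← tsum_mul_left]
  refine tsum_congr fun l => ?_
  have hden := den_pos hq0 hq1 l
  rw [hg']
  have hre : q * (((l:ℝ) + 1) * q ^ l * (1 / (1 - q ^ (l+1)) ^ 3 + 3 * q ^ (l+1) / (1 - q ^ (l+1)) ^ 4))
      = ((l:ℝ) + 1) * ((q ^ l * q) * (1 / (1 - q ^ (l+1)) ^ 3 + 3 * q ^ (l+1) / (1 - q ^ (l+1)) ^ 4)) := by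
    ring
  rw [hre, ← pow_succ q l]
  generalize hX : q ^ (l+1) = X at hden ⊢
  have hne : 1 - X ≠ 0 := hden.ne'
  field_simp
  ring

lemma delta_formula :
    deltaZbar1 q 3 = 3 * zbar1 q 4 - 2 * zbar1 q 3 + (3 * NB q 4 - 2 * NB q 3) := by
  rw [deriv_zbar3 hq0 hq1]
  set v : ℕ → ℝ := fun l => 3 * q ^ (l + 1) / (1 - q ^ (l + 1)) ^ 4 - 2 * q ^ (l + 1) / (1 - q ^ (l + 1)) ^ 3 with hv
  have sv : Summable v :=
    (((summable_zbar1 hq0 hq1 4).mul_left 3).sub ((summable_zbar1 hq0 hq1 3).mul_left 2)).congr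
      (fun l => by rw [hv]; ring)
  have sw0 := summable_wshift hq0 hq1 4 0
  have sw0' := summable_wshift hq0 hq1 3 0
  have sv1 : Summable (fun l : ℕ => ((l:ℝ) + 1) * v l) := by
    refine ((sw0.mul_left 3).sub (sw0'.mul_left 2)).congr (fun l => ?_)
    rw [hv]
    show 3 * (((l:ℝ)+1) * q ^ (l+0+1) / (1 - q ^ (l+0+1)) ^ 4) - 2 * (((l:ℝ)+1) * q ^ (l+0+1) / (1 - q ^ (l+0+1)) ^ 3)
      = ((l:ℝ)+1) * (3 * q ^ (l+1) / (1 - q ^ (l+1)) ^ 4 - 2 * q ^ (l+1) / (1 - q ^ (l+1)) ^ 3)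
    ring
  have slv : Summable (fun l : ℕ => (l:ℝ) * v l) :=
    (sv1.sub sv).congr (fun l => by ring)
  have sNB4 : Summable (fun l : ℕ => ((l:ℝ)+1) * q ^ (l+2) / (1 - q ^ (l+2)) ^ 4) :=
    summable_wshift hq0 hq1 4 1
  have sNB3 : Summable (fun l : ℕ => ((l:ℝ)+1) * q ^ (l+2) / (1 - q ^ (l+2)) ^ 3) :=
    summable_wshift hq0 hq1 3 1
  have step1 : (∑' l : ℕ, ((l:ℝ) + 1) * v l) = (∑' l : ℕ, v l) + ∑' l : ℕ, (l:ℝ) * v l := by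
    rw [← Summable.tsum_add sv slv]
    exact tsum_congr fun l => by ring
  have step2 : (∑' l : ℕ, (l:ℝ) * v l) = ∑' l : ℕ, ((l:ℝ) + 1) * v (l + 1) := by
    rw [slv.tsum_eq_zero_add]
    simp only [Nat.cast_zero, zero_mul, zero_add]
    exact tsum_congr fun l => by push_cast; ring
  have step3 : (∑' l : ℕ, ((l:ℝ) + 1) * v (l + 1)) = 3 * NB q 4 - 2 * NB q 3 := by
    rw [NB, NB, ← tsum_mul_left, ← tsum_mul_left, ← Summable.tsum_sub (sNB4.mul_left 3) (sNB3.mul_left 2)]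
    refine tsum_congr fun l => ?_
    rw [hv]
    show ((l:ℝ) + 1) * (3 * q ^ (l+2) / (1 - q ^ (l+2)) ^ 4 - 2 * q ^ (l+2) / (1 - q ^ (l+2)) ^ 3)
      = 3 * (((l:ℝ)+1) * q ^ (l+2) / (1 - q ^ (l+2)) ^ 4) - 2 * (((l:ℝ)+1) * q ^ (l+2) / (1 - q ^ (l+2)) ^ 3)
    ring
  have step4 : (∑' l : ℕ, v l) = 3 * zbar1 q 4 - 2 * zbar1 q 3 := by
    rw [zbar1, zbar1, ← tsum_mul_left, ← tsum_mul_left,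
      ← Summable.tsum_sub ((summable_zbar1 hq0 hq1 4).mul_left 3) ((summable_zbar1 hq0 hq1 3).mul_left 2)]
    refine tsum_congr fun l => ?_
    rw [hv]
    ring
  rw [step1, step2, step3, step4]

lemma prod_eq : zbar1 q 2 * zbar1 q 3 = W q 0 2 3 := by
  have hnorm : ∀ s : ℕ, Summable (fun l : ℕ => ‖q ^ (l+1) / (1 - q ^ (l+1)) ^ s‖) := by
    intro s
    refine (summable_zbar1 hq0 hq1 s).congr fun l => ?_
    have h1 := den_pos hq0 hq1 l
    exact (Real.norm_of_nonneg (by positivity)).symm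
  rw [zbar1, zbar1, W,
    tsum_mul_tsum_of_summable_norm (hnorm 2) (hnorm 3)]
  refine tsum_congr fun p => ?_
  rw [Wf, pow_zero, one_mul, div_mul_div_comm]

end

/-- `z̄_q(2)·z̄_q(3) = 3z̄_q(3,2) + z̄_q(2,3) + 6z̄_q(4,1) − 2z̄_q(2,2) − 7z̄_q(3,1)
  + z̄_q(2,1) − δz̄_q(3) + 3z̄_q(4) − 2z̄_q(3)`. -/
theorem zbar2_mul_zbar3 (q : ℝ) (hq0 : 0 < q) (hq1 : q < 1) :
    zbar1 q 2 * zbar1 q 3 =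
      3 * zbar2 q 3 2 + zbar2 q 2 3 + 6 * zbar2 q 4 1
        - 2 * zbar2 q 2 2 - 7 * zbar2 q 3 1 + zbar2 q 2 1
        - deltaZbar1 q 3 + 3 * zbar1 q 4 - 2 * zbar1 q 3 := by
  rw [prod_eq hq0 hq1, delta_formula hq0 hq1]
  rw [W_rec hq0 hq1 0 1 2, W_rec hq0 hq1 1 0 2, W_rec hq0 hq1 1 1 1, W_rec hq0 hq1 1 0 1,
    W_rec hq0 hq1 2 0 1, W_rec hq0 hq1 2 1 0, W_rec hq0 hq1 2 0 0, W_rec hq0 hq1 3 0 0]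
  rw [W_a0 2 3, W_a0 2 2, W_a0 2 1, W_a0 3 2, W_a0 3 1, W_b0 3 2, W_b0 3 1,
    W_a0 4 1, W_b0 4 1, W_00 hq0 hq1 3, W_00 hq0 hq1 4]
  ring
end

section
/- For 0 < q < 1: −\sum_{l>0} (l−1) q^l (1 + 4q^l + q^{2l})/(1−q^l)^5 = −(3/2)δ\bar{z}_q(4) + (1/2)δ\bar{z}_q(3) + 6\bar{z}_q(5) − 6\bar{z}_q(4) + \bar{z}_q(3), where δ = q d/dq and \bar{z}_q(s) = \sum_{l>0} q^l/(1−q^l)^s. -/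
open Set


noncomputable def Dterm (s n : ℕ) (t : ℝ) : ℝ :=
  (n + 1 : ℝ) * t ^ n * ((1 - t ^ (n + 1)) + (s + 1 : ℝ) * t ^ (n + 1)) / (1 - t ^ (n + 1)) ^ (s + 2)

lemma term_hasDerivAt (s n : ℕ) {t : ℝ} (ht : |t| < 1) :
    HasDerivAt (fun x : ℝ => x ^ (n + 1) / (1 - x ^ (n + 1)) ^ (s + 1)) (Dterm s n t) t := by
  have hlt : |t ^ (n + 1)| < 1 := by
    rw [abs_pow]; exact pow_lt_one₀ (abs_nonneg t) ht (Nat.succ_ne_zero n)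
  have hne : (1 - t ^ (n + 1)) ≠ 0 := by
    have := abs_lt.mp hlt; nlinarith [this.1, this.2]
  have h1 : HasDerivAt (fun x : ℝ => x ^ (n + 1)) ((n + 1 : ℝ) * t ^ n) t := by
    simpa using hasDerivAt_pow (n + 1) t
  have h2 : HasDerivAt (fun x : ℝ => (1 - x ^ (n + 1)) ^ (s + 1))
      ((s + 1 : ℝ) * (1 - t ^ (n + 1)) ^ s * (0 - (n + 1 : ℝ) * t ^ n)) t := by
    have := ((hasDerivAt_const t (1 : ℝ)).sub h1).fun_pow (s + 1)
    simpa using this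
  have h3 : HasDerivAt (fun x : ℝ => x ^ (n + 1) / (1 - x ^ (n + 1)) ^ (s + 1)) _ t :=
    h1.fun_div h2 (pow_ne_zero _ hne)
  convert h3 using 1
  rw [Dterm]
  field_simp
  ring

lemma one_sub_pos {q : ℝ} (hq0 : 0 < q) (hq1 : q < 1) (n : ℕ) : 0 < 1 - q ^ (n + 1) := by
  have : q ^ (n + 1) < 1 := pow_lt_one₀ hq0.le hq1 (Nat.succ_ne_zero n)
  linarith

lemma one_sub_ge {q : ℝ} (hq0 : 0 < q) (hq1 : q < 1) (n : ℕ) : 1 - q ≤ 1 - q ^ (n + 1) := by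
  have : q ^ (n + 1) ≤ q := by
    calc q ^ (n + 1) ≤ q ^ 1 := pow_le_pow_of_le_one hq0.le hq1.le (by norm_num)
    _ = q := pow_one q
  linarith

lemma summable_z {q : ℝ} (hq0 : 0 < q) (hq1 : q < 1) (s : ℕ) :
    Summable (fun n : ℕ => q ^ (n + 1) / (1 - q ^ (n + 1)) ^ s) := by
  have h1q : (0:ℝ) < 1 - q := by linarith
  have hgeo : Summable (fun n : ℕ => q ^ (n + 1) * ((1 - q) ^ s)⁻¹) := by
    have h : Summable (fun n : ℕ => q ^ n) := summable_geometric_of_lt_one hq0.le hq1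
    exact (h.mul_left (q * ((1 - q) ^ s)⁻¹)).congr (fun n => by ring)
  refine Summable.of_nonneg_of_le (fun n => ?_) (fun n => ?_) hgeo
  · exact div_nonneg (by positivity) (pow_nonneg (one_sub_pos hq0 hq1 n).le s)
  · rw [div_eq_mul_inv]
    apply mul_le_mul_of_nonneg_left _ (by positivity)
    apply inv_anti₀ (pow_pos h1q s)
    exact pow_le_pow_left₀ (by linarith) (one_sub_ge hq0 hq1 n) s

lemma Dterm_bound {b : ℝ} (hb0 : 0 < b) (hb1 : b < 1) (s n : ℕ) {y : ℝ} (hy : |y| ≤ b) :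
    ‖Dterm s n y‖ ≤ ((s + 3 : ℝ) / (1 - b) ^ (s + 2)) * ((n + 1 : ℝ) * b ^ n) := by
  have h1b : (0:ℝ) < 1 - b := by linarith
  have hyn : |y ^ (n + 1)| ≤ b := by
    rw [abs_pow]
    calc |y| ^ (n + 1) ≤ b ^ (n + 1) := pow_le_pow_left₀ (abs_nonneg y) hy _
    _ ≤ b ^ 1 := pow_le_pow_of_le_one hb0.le hb1.le (by norm_num)
    _ = b := pow_one b
  have hden : 1 - b ≤ |1 - y ^ (n + 1)| := by
    have := abs_le.mp hyn
    rw [abs_of_pos (by linarith)]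
    linarith
  have hnum : |(n + 1 : ℝ) * y ^ n * ((1 - y ^ (n + 1)) + (s + 1 : ℝ) * y ^ (n + 1))| ≤
      (n + 1 : ℝ) * b ^ n * (s + 3 : ℝ) := by
    rw [abs_mul, abs_mul]
    have h1 : |(n + 1 : ℝ)| = (n + 1 : ℝ) := abs_of_pos (by positivity)
    have h2 : |y ^ n| ≤ b ^ n := by rw [abs_pow]; exact pow_le_pow_left₀ (abs_nonneg y) hy n
    have h3 : |(1 - y ^ (n + 1)) + (s + 1 : ℝ) * y ^ (n + 1)| ≤ (s + 3 : ℝ) := by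
      have hb' : b ≤ 1 := hb1.le
      have := abs_le.mp hyn
      have habs : |(s + 1 : ℝ) * y ^ (n + 1)| ≤ (s + 1 : ℝ) := by
        rw [abs_mul, abs_of_pos (by positivity : (0:ℝ) < (s + 1 : ℝ))]
        nlinarith [abs_nonneg (y ^ (n+1))]
      have h4 := abs_le.mp habs
      have h5 : |1 - y ^ (n + 1)| ≤ 2 := by rw [abs_sub_comm] at *; rw [abs_le]; constructor <;> nlinarith
      calc |(1 - y ^ (n + 1)) + (s + 1 : ℝ) * y ^ (n + 1)| ≤ |1 - y ^ (n + 1)| + |(s + 1 : ℝ) * y ^ (n + 1)| := abs_add_le _ _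
      _ ≤ 2 + (s + 1 : ℝ) := add_le_add h5 habs
      _ = (s + 3 : ℝ) := by ring
    rw [h1]
    have hbn : (0:ℝ) ≤ b ^ n := by positivity
    nlinarith [abs_nonneg (y^n), abs_nonneg ((1 - y ^ (n + 1)) + (s + 1 : ℝ) * y ^ (n + 1)), mul_le_mul h2 h3 (abs_nonneg _) hbn]
  have habspos : (0:ℝ) < |1 - y ^ (n + 1)| := lt_of_lt_of_le h1b hden
  rw [Dterm, Real.norm_eq_abs, abs_div, abs_pow]
  rw [div_le_iff₀ (pow_pos habspos (s + 2))]
  · calc |(n + 1 : ℝ) * y ^ n * ((1 - y ^ (n + 1)) + (s + 1 : ℝ) * y ^ (n + 1))|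
        ≤ (n + 1 : ℝ) * b ^ n * (s + 3 : ℝ) := hnum
    _ = ((s + 3 : ℝ) / (1 - b) ^ (s + 2)) * ((n + 1 : ℝ) * b ^ n) * (1 - b) ^ (s + 2) := by
        field_simp [ne_of_gt (pow_pos h1b (s + 2))]
    _ ≤ ((s + 3 : ℝ) / (1 - b) ^ (s + 2)) * ((n + 1 : ℝ) * b ^ n) * |1 - y ^ (n + 1)| ^ (s + 2) := by
        apply mul_le_mul_of_nonneg_left (pow_le_pow_left₀ (by linarith) hden _)
        exact mul_nonneg (div_nonneg (by positivity) (pow_pos h1b _).le) (by positivity)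

lemma deriv_zbar1 {q : ℝ} (hq0 : 0 < q) (hq1 : q < 1) (s : ℕ) :
    deriv (fun t : ℝ => zbar1 t (s + 1)) q = ∑' n : ℕ, Dterm s n q := by
  set b : ℝ := (1 + q) / 2 with hb
  have hb0 : 0 < b := by rw [hb]; linarith
  have hb1 : b < 1 := by rw [hb]; linarith
  have hqb : q < b := by rw [hb]; linarith
  have hmem : q ∈ Ioo (-b) b := ⟨by linarith, hqb⟩
  have hu : Summable (fun n : ℕ => ((s + 3 : ℝ) / (1 - b) ^ (s + 2)) * ((n + 1 : ℝ) * b ^ n)) := by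
    apply Summable.mul_left
    have h1 : Summable (fun n : ℕ => (n : ℝ) * b ^ n) := by
      simpa using summable_pow_mul_geometric_of_norm_lt_one 1 (by rwa [Real.norm_eq_abs, abs_of_pos hb0])
    have h2 : Summable (fun n : ℕ => b ^ n) := summable_geometric_of_lt_one hb0.le hb1
    exact (h1.add h2).congr (fun n => by ring)
  have key : HasDerivAt (fun t : ℝ => ∑' n : ℕ, t ^ (n + 1) / (1 - t ^ (n + 1)) ^ (s + 1))
      (∑' n : ℕ, Dterm s n q) q := by
    apply hasDerivAt_tsum_of_isPreconnected hu isOpen_Ioo isPreconnected_Ioo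
      (fun n y hy => term_hasDerivAt s n (by have h1 := hy.1; have h2 := hy.2; rw [abs_lt]; constructor <;> linarith))
      (fun n y hy => Dterm_bound hb0 hb1 s n (abs_le.mpr ⟨hy.1.le, hy.2.le⟩)) hmem
      (summable_z hq0 hq1 (s + 1)) hmem
  have : (fun t : ℝ => zbar1 t (s + 1)) = fun t : ℝ => ∑' n : ℕ, t ^ (n + 1) / (1 - t ^ (n + 1)) ^ (s + 1) := rfl
  rw [this]
  exact key.deriv

lemma summable_D {q : ℝ} (hq0 : 0 < q) (hq1 : q < 1) (s : ℕ) :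
    Summable (fun n : ℕ => Dterm s n q) := by
  have hu : Summable (fun n : ℕ => ((s + 3 : ℝ) / (1 - q) ^ (s + 2)) * ((n + 1 : ℝ) * q ^ n)) := by
    apply Summable.mul_left
    have h1 : Summable (fun n : ℕ => (n : ℝ) * q ^ n) := by
      simpa using summable_pow_mul_geometric_of_norm_lt_one 1
        (by rwa [Real.norm_eq_abs, abs_of_pos hq0])
    have h2 : Summable (fun n : ℕ => q ^ n) := summable_geometric_of_lt_one hq0.le hq1
    exact (h1.add h2).congr (fun n => by ring)
  exact Summable.of_norm_bounded hu
    (fun n => Dterm_bound hq0 hq1 s n (le_of_eq (abs_of_pos hq0)))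

lemma delta_eq {q : ℝ} (hq0 : 0 < q) (hq1 : q < 1) (s : ℕ) :
    deltaZbar1 q (s + 1) = ∑' n : ℕ, q * Dterm s n q := by
  rw [deltaZbar1, deriv_zbar1 hq0 hq1 s]
  exact (tsum_mul_left).symm

/-- `−∑_{l>0} (l−1) qˡ (1+4qˡ+q^{2l})/(1−qˡ)⁵
  = −(3/2)δz̄_q(4) + (1/2)δz̄_q(3) + 6z̄_q(5) − 6z̄_q(4) + z̄_q(3)`. -/
theorem z33_identity (q : ℝ) (hq0 : 0 < q) (hq1 : q < 1) :
    -(∑' l : ℕ, (l : ℝ) * q ^ (l + 1) * (1 + 4 * q ^ (l + 1) + q ^ (2 * (l + 1))) /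
        (1 - q ^ (l + 1)) ^ 5) =
      -(3 / 2) * deltaZbar1 q 4 + (1 / 2) * deltaZbar1 q 3
        + 6 * zbar1 q 5 - 6 * zbar1 q 4 + zbar1 q 3 := by
  have hD3 : Summable (fun n : ℕ => q * Dterm 3 n q) := (summable_D hq0 hq1 3).mul_left q
  have hD2 : Summable (fun n : ℕ => q * Dterm 2 n q) := (summable_D hq0 hq1 2).mul_left q
  have hz5 := summable_z hq0 hq1 5
  have hz4 := summable_z hq0 hq1 4
  have hz3 := summable_z hq0 hq1 3
  have e4 : deltaZbar1 q 4 = ∑' n : ℕ, q * Dterm 3 n q := delta_eq hq0 hq1 3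
  have e3 : deltaZbar1 q 3 = ∑' n : ℕ, q * Dterm 2 n q := delta_eq hq0 hq1 2
  rw [e4, e3]
  simp only [zbar1]
  rw [← tsum_mul_left, ← tsum_mul_left, ← tsum_mul_left, ← tsum_mul_left]
  have h1 : Summable (fun n : ℕ => (-(3/2) : ℝ) * (q * Dterm 3 n q)) := hD3.mul_left _
  have h2 : Summable (fun n : ℕ => ((1/2) : ℝ) * (q * Dterm 2 n q)) := hD2.mul_left _
  have h3 : Summable (fun n : ℕ => (6 : ℝ) * (q ^ (n + 1) / (1 - q ^ (n + 1)) ^ 5)) := hz5.mul_left _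
  have h4 : Summable (fun n : ℕ => (6 : ℝ) * (q ^ (n + 1) / (1 - q ^ (n + 1)) ^ 4)) := hz4.mul_left _
  rw [← h1.tsum_add h2, ← (h1.add h2).tsum_add h3, ← ((h1.add h2).add h3).tsum_sub h4,
    ← (((h1.add h2).add h3).sub h4).tsum_add hz3, ← tsum_neg]
  apply tsum_congr
  intro l
  have hne : (1 - q ^ (l + 1)) ≠ 0 := (one_sub_pos hq0 hq1 l).ne'
  simp only [Dterm]
  rw [show 2 * (l + 1) = (l + 1) * 2 from Nat.mul_comm _ _, pow_mul]
  push_cast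
  field_simp
  ring
end
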